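/- Let x : I → ℝⁿ be a unit speed regular curve with ρ(s) = ‖x(s)‖ > 0 satisfying |ρ'(s)| = 1 for all s. Then x(I) is an open portion of a straight line through the origin. -/

import Mathlib

open Set

/-- A unit speed curve x on an open interval with ρ = ‖x‖ > 0
and |ρ'| ≡ 1 is an open portion of a line through the origin. -/
theorem stmt6
    (n : ℕ) (α β : ℝ) (x T : ℝ → EuclideanSpace ℝ (Fin n)) (ρ' : ℝ → ℝ)
    (hT : ∀ s ∈ Set.Ioo α β, HasDerivAt x (T s) s)
    (hunit : ∀ s ∈ Set.Ioo α β, ‖T s‖ = 1)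
    (hx0 : ∀ s ∈ Set.Ioo α β, 0 < ‖x s‖)
    (hρ : ∀ s ∈ Set.Ioo α β, HasDerivAt (fun t => ‖x t‖) (ρ' s) s)
    (h1 : ∀ s ∈ Set.Ioo α β, |ρ' s| = 1) :
    ∃ v : EuclideanSpace ℝ (Fin n),
      ∀ s ∈ Set.Ioo α β, ∃ t : ℝ, x s = t • v := by
  rcases Set.eq_empty_or_nonempty (Set.Ioo α β) with he | ⟨s₀, hs₀⟩
  · exact ⟨0, fun s hs => absurd hs (by simp [he])⟩
  set g : ℝ → EuclideanSpace ℝ (Fin n) := fun s => (‖x s‖)⁻¹ • x s with hg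
  -- ⟪x s, T s⟫ = ρ' s * ‖x s‖
  have hinner : ∀ s ∈ Set.Ioo α β, (inner ℝ (x s) (T s) : ℝ) = ρ' s * ‖x s‖ := by
    intro s hs
    have h2 : HasDerivAt (fun t => ‖x t‖ * ‖x t‖) (ρ' s * ‖x s‖ + ‖x s‖ * ρ' s) s :=
      (hρ s hs).mul (hρ s hs)
    have h3 : HasDerivAt (fun t => (inner ℝ (x t) (x t) : ℝ))
        ((inner ℝ (x s) (T s) : ℝ) + inner ℝ (T s) (x s)) s :=
      (hT s hs).inner ℝ (hT s hs)
    have heq : (fun t => (inner ℝ (x t) (x t) : ℝ)) = fun t => ‖x t‖ * ‖x t‖ := by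
      funext t; exact real_inner_self_eq_norm_mul_norm (x t)
    rw [heq] at h3
    have := h3.unique h2
    have hc : (inner ℝ (T s) (x s) : ℝ) = inner ℝ (x s) (T s) := real_inner_comm _ _
    linarith
  -- T s = (ρ' s / ‖x s‖) • x s
  have key : ∀ s ∈ Set.Ioo α β, T s = (ρ' s / ‖x s‖) • x s := by
    intro s hs
    have hρpos := hx0 s hs
    have hsq : ρ' s * ρ' s = 1 := by
      have := h1 s hs
      nlinarith [abs_nonneg (ρ' s), sq_abs (ρ' s)]
    have : ‖T s - (ρ' s / ‖x s‖) • x s‖ ^ 2 = 0 := by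
      rw [← real_inner_self_eq_norm_sq]
      rw [inner_sub_sub_self]
      rw [real_inner_smul_left, real_inner_smul_right, real_inner_smul_left,
        real_inner_smul_right]
      rw [real_inner_self_eq_norm_sq (T s), real_inner_self_eq_norm_sq (x s),
        hunit s hs, real_inner_comm (x s) (T s), hinner s hs]
      field_simp
      linear_combination (-1) * hsq
    have h0 : T s - (ρ' s / ‖x s‖) • x s = 0 := by
      have := pow_eq_zero_iff (n := 2) (by norm_num) |>.mp this
      exact norm_eq_zero.mp this
    linear_combination (norm := module) h0
  -- g has derivative 0 on the interval
  have hg' : ∀ s ∈ Set.Ioo α β, HasDerivAt g 0 s := by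
    intro s hs
    have hρpos := hx0 s hs
    have hinv : HasDerivAt (fun t => (‖x t‖)⁻¹) (-(ρ' s) / ‖x s‖ ^ 2) s := by
      simpa [div_eq_mul_inv, Pi.inv_def] using (hρ s hs).inv (ne_of_gt hρpos)
    have := hinv.smul (hT s hs)
    rw [key s hs] at this
    refine this.congr_deriv ?_
    symm
    rw [smul_smul]
    match_scalars
    field_simp
    ring
  -- g is constant on Ioo
  have hconst : ∀ s ∈ Set.Ioo α β, g s = g s₀ := by
    intro s hs
    have hconv : Convex ℝ (Set.Ioo α β) := convex_Ioo α β
    have hdiff : DifferentiableOn ℝ g (Set.Ioo α β) := fun t ht =>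
      ((hg' t ht).differentiableAt).differentiableWithinAt
    refine hconv.is_const_of_fderivWithin_eq_zero hdiff (fun t ht => ?_) hs hs₀
    rw [fderivWithin_of_isOpen isOpen_Ioo ht]
    have := (hg' t ht).hasFDerivAt.fderiv
    rw [this]
    ext y
    simp
  refine ⟨g s₀, fun s hs => ⟨‖x s‖, ?_⟩⟩
  rw [← hconst s hs, hg]
  have hρpos := hx0 s hs
  rw [smul_smul, mul_inv_cancel₀ (ne_of_gt hρpos), one_smul]
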